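/- Let P, X, Y be normed vector spaces, C ⊆ Y a closed convex cone, and F: P×X ⇉ Y a set-valued mapping with nonempty values which is C-concave on P×X. Then the merit function ν_{F,C}: P×X → [0,+∞], ν_{F,C}(p,x) = sup_{y∈F(p,x)} dist(y,C), is a convex function: ν_{F,C}(t(p1,x1) + (1−t)(p2,x2)) ≤ t ν_{F,C}(p1,x1) + (1−t) ν_{F,C}(p2,x2) for all (p1,x1), (p2,x2) ∈ P×X and t ∈ [0,1]. -/
import Mathlib


open Set
open scoped ENNReal Pointwise

/-- Excess of `A` over `C`: `e(A,C) = sup_{a ∈ A} dist(a,C)`. -/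
noncomputable def exc {Y : Type*} [PseudoEMetricSpace Y] (A C : Set Y) : ℝ≥0∞ :=
  ⨆ y ∈ A, EMetric.infEdist y C

/-- If `F : P × X ⇉ Y` is `C`-concave (with `C` a closed convex cone), then the
merit function `ν_{F,C}(p,x) = sup_{y ∈ F(p,x)} dist(y,C)` is convex. -/
theorem merit_function_convex_of_C_concave
    {P X Y : Type*} [NormedAddCommGroup P] [NormedSpace ℝ P]
    [NormedAddCommGroup X] [NormedSpace ℝ X]
    [NormedAddCommGroup Y] [NormedSpace ℝ Y]
    (C : Set Y) (hCclosed : IsClosed C) (hCconv : Convex ℝ C)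
    (hCcone : ∀ t : ℝ, 0 < t → ∀ y ∈ C, t • y ∈ C)
    (F : P → X → Set Y) (hFne : ∀ p x, (F p x).Nonempty)
    (hFconc : ∀ w₁ w₂ : P × X, ∀ t ∈ Icc (0:ℝ) 1,
      F (t • w₁ + (1 - t) • w₂).1 (t • w₁ + (1 - t) • w₂).2 ⊆
        t • F w₁.1 w₁.2 + (1 - t) • F w₂.1 w₂.2 + C) :
    ∀ w₁ w₂ : P × X, ∀ t ∈ Icc (0:ℝ) 1,
      exc (F (t • w₁ + (1 - t) • w₂).1 (t • w₁ + (1 - t) • w₂).2) C ≤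
        ENNReal.ofReal t * exc (F w₁.1 w₁.2) C +
        ENNReal.ofReal (1 - t) * exc (F w₂.1 w₂.2) C := by
  intro w₁ w₂ t ht
  obtain ⟨ht0, ht1⟩ := ht
  -- C is closed under addition
  have hCadd : ∀ u ∈ C, ∀ v ∈ C, u + v ∈ C := by
    intro u hu v hv
    have h2 : ((2:ℝ)) • ((1/2 : ℝ) • u + (1/2 : ℝ) • v) ∈ C := by
      apply hCcone 2 (by norm_num)
      exact hCconv hu hv (by norm_num) (by norm_num) (by norm_num)
    have : ((2:ℝ)) • ((1/2 : ℝ) • u + (1/2 : ℝ) • v) = u + v := by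
      rw [smul_add, smul_smul, smul_smul]
      norm_num
    rwa [this] at h2
  -- C is nonempty
  have hCne : C.Nonempty := by
    obtain ⟨y0, hy0⟩ := hFne w₁.1 w₁.2
    have h := hFconc w₁ w₁ 1 ⟨zero_le_one, le_refl 1⟩
    have hw : (1:ℝ) • w₁ + (1 - 1 : ℝ) • w₁ = w₁ := by
      simp
    rw [hw] at h
    obtain ⟨u, _, c, hc, _⟩ := h hy0
    exact ⟨c, hc⟩
  -- main bound on each y in LHS
  apply iSup₂_le
  intro y hy
  obtain ⟨u, hu, c, hc, rfl⟩ := hFconc w₁ w₂ t ⟨ht0, ht1⟩ hy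
  obtain ⟨a, ha, b, hb, rfl⟩ := hu
  obtain ⟨y₁, hy₁, rfl⟩ := ha
  obtain ⟨y₂, hy₂, rfl⟩ := hb
  -- abbreviations
  set e₁ := EMetric.infEdist y₁ C with he₁
  set e₂ := EMetric.infEdist y₂ C with he₂
  have he₁top : e₁ ≠ ⊤ := by
    obtain ⟨c0, hc0⟩ := hCne
    exact ne_top_of_le_ne_top (edist_ne_top y₁ c0) (EMetric.infEdist_le_edist_of_mem hc0)
  have he₂top : e₂ ≠ ⊤ := by
    obtain ⟨c0, hc0⟩ := hCne
    exact ne_top_of_le_ne_top (edist_ne_top y₂ c0) (EMetric.infEdist_le_edist_of_mem hc0)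
  have key : EMetric.infEdist (t • y₁ + (1 - t) • y₂ + c) C ≤
      ENNReal.ofReal t * e₁ + ENNReal.ofReal (1 - t) * e₂ := by
    apply ENNReal.le_of_forall_pos_le_add
    intro ε hε _
    have hε2 : (0:ℝ≥0∞) < (ε:ℝ≥0∞) / 2 := by
      simp [ENNReal.div_pos_iff, hε.ne']
    obtain ⟨z₁, hz₁C, hz₁⟩ := EMetric.infEdist_lt_iff.mp
      (show e₁ < e₁ + ε / 2 from ENNReal.lt_add_right he₁top hε2.ne')
    obtain ⟨z₂, hz₂C, hz₂⟩ := EMetric.infEdist_lt_iff.mp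
      (show e₂ < e₂ + ε / 2 from ENNReal.lt_add_right he₂top hε2.ne')
    have hzC : t • z₁ + (1 - t) • z₂ + c ∈ C :=
      hCadd _ (hCconv hz₁C hz₂C ht0 (by linarith) (by ring)) _ hc
    have hdist : dist (t • y₁ + (1 - t) • y₂ + c) (t • z₁ + (1 - t) • z₂ + c) ≤
        t * dist y₁ z₁ + (1 - t) * dist y₂ z₂ := by
      rw [dist_eq_norm, dist_eq_norm, dist_eq_norm]
      have hrw : (t • y₁ + (1 - t) • y₂ + c) - (t • z₁ + (1 - t) • z₂ + c) =
          t • (y₁ - z₁) + (1 - t) • (y₂ - z₂) := by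
        rw [smul_sub, smul_sub]; abel
      rw [hrw]
      calc ‖t • (y₁ - z₁) + (1 - t) • (y₂ - z₂)‖
          ≤ ‖t • (y₁ - z₁)‖ + ‖(1 - t) • (y₂ - z₂)‖ := norm_add_le _ _
        _ = t * ‖y₁ - z₁‖ + (1 - t) * ‖y₂ - z₂‖ := by
            rw [norm_smul, norm_smul, Real.norm_eq_abs, Real.norm_eq_abs,
              abs_of_nonneg ht0, abs_of_nonneg (by linarith : (0:ℝ) ≤ 1 - t)]
    have hedist : edist (t • y₁ + (1 - t) • y₂ + c) (t • z₁ + (1 - t) • z₂ + c) ≤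
        ENNReal.ofReal t * edist y₁ z₁ + ENNReal.ofReal (1 - t) * edist y₂ z₂ := by
      rw [edist_dist, edist_dist, edist_dist, ← ENNReal.ofReal_mul ht0,
        ← ENNReal.ofReal_mul (by linarith : (0:ℝ) ≤ 1 - t),
        ← ENNReal.ofReal_add (mul_nonneg ht0 dist_nonneg)
          (mul_nonneg (by linarith : (0:ℝ) ≤ 1 - t) dist_nonneg)]
      exact ENNReal.ofReal_le_ofReal hdist
    have ht1' : ENNReal.ofReal t ≤ 1 := ENNReal.ofReal_le_one.mpr ht1
    have ht2' : ENNReal.ofReal (1 - t) ≤ 1 := ENNReal.ofReal_le_one.mpr (by linarith)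
    calc EMetric.infEdist (t • y₁ + (1 - t) • y₂ + c) C
        ≤ edist (t • y₁ + (1 - t) • y₂ + c) (t • z₁ + (1 - t) • z₂ + c) :=
          EMetric.infEdist_le_edist_of_mem hzC
      _ ≤ ENNReal.ofReal t * edist y₁ z₁ + ENNReal.ofReal (1 - t) * edist y₂ z₂ := hedist
      _ ≤ ENNReal.ofReal t * (e₁ + ε / 2) + ENNReal.ofReal (1 - t) * (e₂ + ε / 2) :=
          add_le_add (mul_le_mul_right hz₁.le _) (mul_le_mul_right hz₂.le _)
      _ ≤ ENNReal.ofReal t * e₁ + (ε:ℝ≥0∞) / 2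
            + (ENNReal.ofReal (1 - t) * e₂ + (ε:ℝ≥0∞) / 2) := by
          rw [mul_add, mul_add]
          gcongr
          · exact ((mul_le_mul_left ht1' _).trans_eq (one_mul _))
          · exact ((mul_le_mul_left ht2' _).trans_eq (one_mul _))
      _ = ENNReal.ofReal t * e₁ + ENNReal.ofReal (1 - t) * e₂ + (ε:ℝ≥0∞) := by
          rw [add_add_add_comm, ENNReal.add_halves]
  beta_reduce
  refine key.trans ?_
  gcongr
  · exact le_iSup₂ (f := fun y (_ : y ∈ F w₁.1 w₁.2) => EMetric.infEdist y C) y₁ hy₁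
  · exact le_iSup₂ (f := fun y (_ : y ∈ F w₂.1 w₂.2) => EMetric.infEdist y C) y₂ hy₂
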